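/- Let P, Q, and Pˢ be symmetric positive definite n×n real matrices and F an n×n real matrix. Define P⁺ = FPFᵀ + Q, G = PFᵀ(P⁺)⁻¹, 𝒫 = [[P, PFᵀ],[FP, P⁺]], the 4n×2n block matrix A = [[I,0],[0,I],[0,I],[0,I]], and W = blkdiag(𝒫⁻¹, −(P⁺)⁻¹, (Pˢ)⁻¹). Then M = AᵀWA is invertible and the top-left n×n block of M⁻¹ equals P + G(Pˢ − P⁺)Gᵀ. -/

import Mathlib

open Matrix

section Aux
variable {R : Type*} [Ring R] (p pi q qi ps psi pp ppi f ft : R)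
  (hpip : pi * p = 1) (hppi : p * pi = 1)
  (hqiq : qi * q = 1) (hqqi : q * qi = 1)
  (hppippb : ppi * pp = 1) (hpppi : pp * ppi = 1)
  (hpsips : psi * ps = 1)
  (hdef : pp = f * p * ft + q)

include hpip hppi hqiq hqqi hppippb hpppi hpsips hdef in
lemma aux8 :
    (p * (pi + ft * qi * f) + (p * ft) * (-(qi * f)) = 1) ∧
    (p * (-(ft * qi)) + (p * ft) * qi = 0) ∧
    ((f * p) * (pi + ft * qi * f) + pp * (-(qi * f)) = 0) ∧
    ((f * p) * (-(ft * qi)) + pp * qi = 1) ∧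
    ((pi + ft * qi * f) * (p + (p * ft * ppi) * (ps - pp) * (ppi * (f * p))) +
        (-(ft * qi)) * (ps * (ppi * (f * p))) = 1) ∧
    ((pi + ft * qi * f) * ((p * ft * ppi) * ps) + (-(ft * qi)) * ps = 0) ∧
    ((-(qi * f)) * (p + (p * ft * ppi) * (ps - pp) * (ppi * (f * p))) +
        (qi - ppi + psi) * (ps * (ppi * (f * p))) = 0) ∧
    ((-(qi * f)) * ((p * ft * ppi) * ps) + (qi - ppi + psi) * ps = 1) := by
  have rpi : ∀ x : R, pi * (p * x) = x := fun x => by rw [← mul_assoc, hpip, one_mul]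
  have rp : ∀ x : R, p * (pi * x) = x := fun x => by rw [← mul_assoc, hppi, one_mul]
  have rqi : ∀ x : R, qi * (q * x) = x := fun x => by rw [← mul_assoc, hqiq, one_mul]
  have rq : ∀ x : R, q * (qi * x) = x := fun x => by rw [← mul_assoc, hqqi, one_mul]
  have rppi : ∀ x : R, ppi * (pp * x) = x := fun x => by rw [← mul_assoc, hppippb, one_mul]
  have rpp : ∀ x : R, pp * (ppi * x) = x := fun x => by rw [← mul_assoc, hpppi, one_mul]
  have rpsi : ∀ x : R, psi * (ps * x) = x := fun x => by rw [← mul_assoc, hpsips, one_mul]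
  have rf : ∀ x : R, f * (p * (ft * x)) = pp * x - q * x := fun x => by
    rw [hdef]; noncomm_ring
  have rf' : f * (p * ft) = pp - q := by rw [hdef]; noncomm_ring
  refine ⟨?_, ?_, ?_, ?_, ?_, ?_, ?_, ?_⟩ <;>
    simp only [mul_add, add_mul, mul_sub, sub_mul, neg_mul, mul_neg, neg_neg, mul_assoc,
      mul_one, one_mul, rpi, rp, rqi, rq, rppi, rpp, rpsi, rf, rf', hpip, hppi, hqiq, hqqi,
      hppippb, hpppi, hpsips] <;>
    abel
end Aux

/-- The smoothed covariance recursion of the RTS smoother on Lie groups: with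
`A = [[I,0],[0,I],[0,I],[0,I]]` and `W = blkdiag(Pjoint⁻¹, −(P⁺)⁻¹, (Pˢ)⁻¹)`, the matrix
`M = AᵀWA` is invertible and the top-left `n×n` block of `M⁻¹` equals
`P + G(Pˢ − P⁺)Gᵀ`. -/
theorem stmt7 {n : ℕ} (P Q Ps F : Matrix (Fin n) (Fin n) ℝ)
    (hP : P.PosDef) (hQ : Q.PosDef) (hPs : Ps.PosDef) :
    let Pp : Matrix (Fin n) (Fin n) ℝ := F * P * Fᵀ + Q
    let G : Matrix (Fin n) (Fin n) ℝ := P * Fᵀ * Pp⁻¹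
    let Pjoint : Matrix (Fin n ⊕ Fin n) (Fin n ⊕ Fin n) ℝ := fromBlocks P (P * Fᵀ) (F * P) Pp
    let A : Matrix ((Fin n ⊕ Fin n) ⊕ (Fin n ⊕ Fin n)) (Fin n ⊕ Fin n) ℝ :=
      fromRows 1 (fromBlocks 0 1 0 1)
    let W : Matrix ((Fin n ⊕ Fin n) ⊕ (Fin n ⊕ Fin n)) ((Fin n ⊕ Fin n) ⊕ (Fin n ⊕ Fin n)) ℝ :=
      fromBlocks Pjoint⁻¹ 0 0 (fromBlocks (-Pp⁻¹) 0 0 Ps⁻¹)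
    let M : Matrix (Fin n ⊕ Fin n) (Fin n ⊕ Fin n) ℝ := Aᵀ * W * A
    IsUnit M ∧ M⁻¹.toBlocks₁₁ = P + G * (Ps - Pp) * Gᵀ := by
  intro Pp G Pjoint A W M
  have hPpdef : Pp = F * P * Fᵀ + Q := rfl
  have hFPF : (F * P * Fᵀ).PosSemidef := by
    have := hP.posSemidef.mul_mul_conjTranspose_same F
    rwa [conjTranspose_eq_transpose_of_trivial] at this
  have hPp : Pp.PosDef := Matrix.PosDef.posSemidef_add hFPF hQ
  -- determinant units
  have hPd : IsUnit P.det := hP.det_pos.ne'.isUnit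
  have hQd : IsUnit Q.det := hQ.det_pos.ne'.isUnit
  have hPpd : IsUnit Pp.det := hPp.det_pos.ne'.isUnit
  have hPsd : IsUnit Ps.det := hPs.det_pos.ne'.isUnit
  -- symmetry facts
  have hPt : Pᵀ = P := by
    rw [← conjTranspose_eq_transpose_of_trivial]; exact hP.isHermitian
  have hPpt : Ppᵀ = Pp := by
    rw [← conjTranspose_eq_transpose_of_trivial]; exact hPp.isHermitian
  have hPpit : Pp⁻¹ᵀ = Pp⁻¹ := by rw [transpose_nonsing_inv, hPpt]
  have hGt : Gᵀ = Pp⁻¹ * (F * P) := by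
    show (P * Fᵀ * Pp⁻¹)ᵀ = _
    rw [transpose_mul, transpose_mul, hPpit, transpose_transpose, hPt]
  obtain ⟨j11, j12, j21, j22, c11, c12, c21, c22⟩ :=
    aux8 P P⁻¹ Q Q⁻¹ Ps Ps⁻¹ Pp Pp⁻¹ F Fᵀ
      (nonsing_inv_mul P hPd) (mul_nonsing_inv P hPd)
      (nonsing_inv_mul Q hQd) (mul_nonsing_inv Q hQd)
      (nonsing_inv_mul Pp hPpd) (mul_nonsing_inv Pp hPpd)
      (nonsing_inv_mul Ps hPsd) hPpdef
  -- the inverse of the joint covariance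
  have hPjinv : Pjoint⁻¹ =
      fromBlocks (P⁻¹ + Fᵀ * Q⁻¹ * F) (-(Fᵀ * Q⁻¹)) (-(Q⁻¹ * F)) Q⁻¹ := by
    apply inv_eq_right_inv
    show fromBlocks P (P * Fᵀ) (F * P) Pp * _ = _
    rw [fromBlocks_multiply, ← fromBlocks_one, fromBlocks_inj]
    exact ⟨j11, j12, j21, j22⟩
  -- explicit block form of M
  have hM : M = fromBlocks (P⁻¹ + Fᵀ * Q⁻¹ * F) (-(Fᵀ * Q⁻¹)) (-(Q⁻¹ * F))
      (Q⁻¹ - Pp⁻¹ + Ps⁻¹) := by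
    show (fromRows 1 (fromBlocks 0 1 0 1))ᵀ *
        fromBlocks Pjoint⁻¹ 0 0 (fromBlocks (-Pp⁻¹) 0 0 Ps⁻¹) *
        fromRows 1 (fromBlocks 0 1 0 1) = _
    rw [transpose_fromRows, transpose_one, fromBlocks_transpose,
      fromCols_mul_fromBlocks, fromCols_mul_fromRows, hPjinv]
    simp only [Matrix.one_mul, Matrix.mul_one, Matrix.mul_zero, Matrix.zero_mul,
      add_zero, zero_add, transpose_zero, transpose_one, fromBlocks_multiply]
    rw [fromBlocks_add, fromBlocks_inj]
    refine ⟨?_, ?_, ?_, ?_⟩ <;> abel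
  -- the candidate inverse
  have hMN : M * fromBlocks (P + G * (Ps - Pp) * Gᵀ) (G * Ps) (Ps * Gᵀ) Ps = 1 := by
    rw [hM, hGt, fromBlocks_multiply, ← fromBlocks_one, fromBlocks_inj]
    exact ⟨c11, c12, c21, c22⟩
  refine ⟨(isUnit_iff_isUnit_det M).mpr (isUnit_det_of_right_inverse hMN), ?_⟩
  rw [inv_eq_right_inv hMN, toBlocks_fromBlocks₁₁, hGt]
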